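/- In the recursion described in the context, take E₀ = ∅. Then the unions E'_I, Ē_I, E_I of the recursively defined sets are given explicitly by: E'_I = {(−im, j) : m ∈ ℕ, m ≥ 1, 0 ≤ j ≤ 3m−1}; Ē_I = {(0,0)} ∪ E'_I; and E_I = {(−im, j) : m ∈ ℕ, m ≥ 0, 0 ≤ j ≤ 3m+1}. -/

import Mathlib

/-- The extended union `E₁ ∪̄ E₂`. -/
def extUnion (E₁ E₂ : Set (ℂ × ℕ)) : Set (ℂ × ℕ) :=
  E₁ ∪ E₂ ∪
    {p : ℂ × ℕ | ∃ j₁ j₂ : ℕ, (p.1, j₁) ∈ E₁ ∧ (p.1, j₂) ∈ E₂ ∧ p.2 ≤ j₁ + j₂ + 1}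

/-- The sum `E₁ + E₂ = {(z₁+z₂, j₁+j₂)}`. -/
def idxSum (E₁ E₂ : Set (ℂ × ℕ)) : Set (ℂ × ℕ) :=
  {p : ℂ × ℕ | ∃ z₁ : ℂ, ∃ j₁ : ℕ, ∃ z₂ : ℂ, ∃ j₂ : ℕ,
    (z₁, j₁) ∈ E₁ ∧ (z₂, j₂) ∈ E₂ ∧ p = (z₁ + z₂, j₁ + j₂)}

/-- `idxSMul j E` is the `j`-fold sum `E + ⋯ + E` (for `j ≥ 1`). -/
def idxSMul : ℕ → Set (ℂ × ℕ) → Set (ℂ × ℕ)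
  | 0, _ => {((0 : ℂ), (0 : ℕ))}
  | n + 1, E => idxSum E (idxSMul n E)

/-- `E - i = {(z - i, j) : (z,j) ∈ E}`. -/
def idxMinusI (E : Set (ℂ × ℕ)) : Set (ℂ × ℕ) :=
  (fun p : ℂ × ℕ => (p.1 - Complex.I, p.2)) '' E

/-- `F + i = {(z + i, j) : (z,j) ∈ F}`. -/
def idxPlusI (E : Set (ℂ × ℕ)) : Set (ℂ × ℕ) :=
  (fun p : ℂ × ℕ => (p.1 + Complex.I, p.2)) '' E

/-- The index set denoted `0`, i.e. `{(-i n, 0) : n ∈ ℕ}`. -/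
def idxZero : Set (ℂ × ℕ) :=
  {p : ℂ × ℕ | ∃ n : ℕ, p = (-(n : ℂ) * Complex.I, 0)}

/-- The recursion producing the index sets at null infinity: the value at `k` is the triple
`(E'_{I,k}, Ē_{I,k}, E_{I,k})`. -/
def scriRec (E₀ : Set (ℂ × ℕ)) : ℕ → Set (ℂ × ℕ) × Set (ℂ × ℕ) × Set (ℂ × ℕ)
  | 0 => (∅, ∅, ∅)
  | k + 1 =>
      (extUnion E₀ (idxMinusI (idxSMul 2 (scriRec E₀ k).2.2)),
       idxZero ∪ extUnion E₀
         (idxSum (scriRec E₀ k).2.1 (scriRec E₀ k).1 ∪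
           idxMinusI (idxSMul 2 (scriRec E₀ k).2.2)),
       extUnion idxZero (extUnion E₀
           (idxSum (scriRec E₀ k).2.2 (scriRec E₀ k).1 ∪ idxSMul 2 (scriRec E₀ k).2.1)) ∪
         ⋃ (j : ℕ) (_ : 1 ≤ j), idxPlusI (idxSMul j (idxMinusI (scriRec E₀ k).2.2)))

-- target sets
def SA : Set (ℂ × ℕ) := {p : ℂ × ℕ | ∃ m : ℕ, 1 ≤ m ∧ p.2 ≤ 3 * m - 1 ∧ p.1 = -(m : ℂ) * Complex.I}
def SC : Set (ℂ × ℕ) := {p : ℂ × ℕ | ∃ m : ℕ, p.2 ≤ 3 * m + 1 ∧ p.1 = -(m : ℂ) * Complex.I}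
def SB : Set (ℂ × ℕ) := insert ((0 : ℂ), (0 : ℕ)) SA
def SD : Set (ℂ × ℕ) := {p : ℂ × ℕ | ∃ m : ℕ, p.2 ≤ 3 * m ∧ p.1 = -(m : ℂ) * Complex.I}

lemma extUnion_empty (E : Set (ℂ × ℕ)) : extUnion ∅ E = E := by
  ext p
  simp [extUnion]

lemma idxSum_mono {E₁ E₂ F₁ F₂ : Set (ℂ × ℕ)} (h₁ : E₁ ⊆ F₁) (h₂ : E₂ ⊆ F₂) :
    idxSum E₁ E₂ ⊆ idxSum F₁ F₂ := by
  rintro p ⟨z₁, j₁, z₂, j₂, m₁, m₂, rfl⟩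
  exact ⟨z₁, j₁, z₂, j₂, h₁ m₁, h₂ m₂, rfl⟩

lemma idxSMul_mono {E F : Set (ℂ × ℕ)} (h : E ⊆ F) (j : ℕ) : idxSMul j E ⊆ idxSMul j F := by
  induction j with
  | zero => exact subset_rfl
  | succ n ih => exact idxSum_mono h ih

lemma idxMinusI_mono {E F : Set (ℂ × ℕ)} (h : E ⊆ F) : idxMinusI E ⊆ idxMinusI F :=
  Set.image_mono h

lemma idxPlusI_mono {E F : Set (ℂ × ℕ)} (h : E ⊆ F) : idxPlusI E ⊆ idxPlusI F :=
  Set.image_mono h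

lemma mem_SA {m j : ℕ} (hm : 1 ≤ m) (hj : j ≤ 3 * m - 1) : (-(m : ℂ) * Complex.I, j) ∈ SA :=
  ⟨m, hm, hj, rfl⟩

lemma mem_SC {m j : ℕ} (hj : j ≤ 3 * m + 1) : (-(m : ℂ) * Complex.I, j) ∈ SC :=
  ⟨m, hj, rfl⟩

-- arithmetic of points
lemma neg_add_cast (m₁ m₂ : ℕ) :
    -(m₁ : ℂ) * Complex.I + -(m₂ : ℂ) * Complex.I = -((m₁ + m₂ : ℕ) : ℂ) * Complex.I := by
  push_cast; ring

lemma idxZero_subset_SC : idxZero ⊆ SC := by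
  rintro p ⟨n, rfl⟩
  exact mem_SC (by omega)

lemma idxZero_subset_SB : idxZero ⊆ SB := by
  rintro p ⟨n, rfl⟩
  rcases Nat.eq_zero_or_pos n with h | h
  · subst h; left; simp
  · exact Or.inr (mem_SA h (by omega))

-- SA + SA ⊆ SA, SC + SA ⊆ SD, etc.
lemma idxSum_SA_SA : idxSum SA SA ⊆ SA := by
  rintro p ⟨z₁, j₁, z₂, j₂, ⟨m₁, hm₁, hj₁, rfl⟩, ⟨m₂, hm₂, hj₂, rfl⟩, rfl⟩
  rw [neg_add_cast]
  exact mem_SA (by omega) (by omega)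

lemma idxSum_SB_SA : idxSum SB SA ⊆ SA := by
  rintro p ⟨z₁, j₁, z₂, j₂, h₁, ⟨m₂, hm₂, hj₂, rfl⟩, rfl⟩
  rcases h₁ with h₁ | ⟨m₁, hm₁, hj₁, rfl⟩
  · rw [show z₁ = 0 from congrArg Prod.fst h₁, show j₁ = 0 from congrArg Prod.snd h₁]
    simpa using mem_SA hm₂ hj₂
  · rw [neg_add_cast]
    exact mem_SA (by omega) (by omega)

lemma idxSMul_two (E : Set (ℂ × ℕ)) : idxSMul 2 E = idxSum E (idxSum E {((0:ℂ), (0:ℕ))}) := rfl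


lemma idxSum_singleton (E : Set (ℂ × ℕ)) : idxSum E {((0:ℂ), (0:ℕ))} = E := by
  ext p
  constructor
  · rintro ⟨z₁, j₁, z₂, j₂, h₁, h₂, rfl⟩
    simp only [Set.mem_singleton_iff, Prod.mk.injEq] at h₂
    obtain ⟨rfl, rfl⟩ := h₂
    simpa using h₁
  · intro h
    exact ⟨p.1, p.2, 0, 0, h, rfl, by simp⟩

-- 2 SC - i ⊆ SA
lemma minusI_two_SC : idxMinusI (idxSMul 2 SC) ⊆ SA := by
  rw [idxSMul_two, idxSum_singleton]
  rintro p ⟨q, ⟨z₁, j₁, z₂, j₂, ⟨m₁, hj₁, rfl⟩, ⟨m₂, hj₂, rfl⟩, rfl⟩, rfl⟩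
  exact ⟨m₁ + m₂ + 1, by omega, by simp; omega, by push_cast; ring⟩

lemma idxSum_SC_SA : idxSum SC SA ⊆ SD := by
  rintro p ⟨z₁, j₁, z₂, j₂, ⟨m₁, hj₁, rfl⟩, ⟨m₂, hm₂, hj₂, rfl⟩, rfl⟩
  rw [neg_add_cast]
  exact ⟨m₁ + m₂, by simp; omega, rfl⟩

lemma mem_SB_elim : ∀ q ∈ SB, ∃ m : ℕ, q.2 ≤ 3 * m ∧ q.1 = -(m : ℂ) * Complex.I := by
  rintro q (rfl | ⟨m, hm, hj, hz⟩)
  · exact ⟨0, by simp, by simp⟩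
  · exact ⟨m, by omega, hz⟩

lemma two_SB : idxSMul 2 SB ⊆ SD := by
  rw [idxSMul_two, idxSum_singleton]
  rintro p ⟨z₁, j₁, z₂, j₂, h₁, h₂, rfl⟩
  obtain ⟨m₁, hj₁, hz₁⟩ := mem_SB_elim _ h₁
  obtain ⟨m₂, hj₂, hz₂⟩ := mem_SB_elim _ h₂
  simp only at hj₁ hj₂ hz₁ hz₂
  subst hz₁ hz₂
  rw [neg_add_cast]
  exact ⟨m₁ + m₂, by simp; omega, rfl⟩

lemma extUnion_idxZero_SD : extUnion idxZero SD ⊆ SC := by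
  rintro p ((h | ⟨m, hj, hz⟩) | ⟨j₁, j₂, ⟨n, hn⟩, ⟨m, hj₂, hz⟩, hle⟩)
  · exact idxZero_subset_SC h
  · exact ⟨m, by omega, hz⟩
  · have hj₁ : j₁ = 0 := congrArg Prod.snd hn
    exact ⟨m, by omega, hz⟩

def SG : Set (ℂ × ℕ) := {p : ℂ × ℕ | ∃ m : ℕ, 1 ≤ m ∧ p.2 ≤ 3 * m - 2 ∧ p.1 = -(m : ℂ) * Complex.I}

lemma minusI_SC : idxMinusI SC ⊆ SG := by
  rintro p ⟨q, ⟨m, hj, hz⟩, rfl⟩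
  refine ⟨m + 1, by omega, by simp; omega, ?_⟩
  simp only [hz]
  push_cast; ring

lemma sum_SG : idxSum SG ({((0:ℂ), (0:ℕ))} ∪ SG) ⊆ SG := by
  rintro p ⟨z₁, j₁, z₂, j₂, ⟨m₁, hm₁, hj₁, rfl⟩, h₂, rfl⟩
  rcases h₂ with h₂ | ⟨m₂, hm₂, hj₂, rfl⟩
  · simp only [Set.mem_singleton_iff, Prod.mk.injEq] at h₂
    obtain ⟨rfl, rfl⟩ := h₂
    exact ⟨m₁, hm₁, by simp; omega, by simp⟩
  · rw [neg_add_cast]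
    exact ⟨m₁ + m₂, by omega, by simp; omega, rfl⟩

lemma smul_SG : ∀ j : ℕ, idxSMul j SG ⊆ {((0:ℂ), (0:ℕ))} ∪ SG := by
  intro j
  induction j with
  | zero => simp [idxSMul]
  | succ n ih =>
      intro p hp
      exact Or.inr (sum_SG (idxSum_mono subset_rfl ih hp))

lemma smul_SG' {j : ℕ} (hj : 1 ≤ j) : idxSMul j SG ⊆ SG := by
  cases j with
  | zero => omega
  | succ n => exact fun p hp => sum_SG (idxSum_mono subset_rfl (smul_SG n) hp)

lemma plusI_SG : idxPlusI SG ⊆ SC := by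
  rintro p ⟨q, ⟨m, hm, hj, hz⟩, rfl⟩
  refine ⟨m - 1, by show q.2 ≤ _; omega, ?_⟩
  show q.1 + Complex.I = _
  rw [hz]
  rw [Nat.cast_sub hm]
  push_cast; ring

lemma upper : ∀ k : ℕ, (scriRec ∅ k).1 ⊆ SA ∧ (scriRec ∅ k).2.1 ⊆ SB ∧ (scriRec ∅ k).2.2 ⊆ SC := by
  intro k
  induction k with
  | zero => exact ⟨by simp [scriRec], by simp [scriRec], by simp [scriRec]⟩
  | succ n ih =>
      obtain ⟨ihP, ihB, ihC⟩ := ih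
      have hP : idxMinusI (idxSMul 2 (scriRec ∅ n).2.2) ⊆ SA :=
        (idxMinusI_mono (idxSMul_mono ihC 2)).trans minusI_two_SC
      refine ⟨?_, ?_, ?_⟩
      · show extUnion ∅ _ ⊆ SA
        rw [extUnion_empty]
        exact hP
      · show idxZero ∪ extUnion ∅ _ ⊆ SB
        rw [extUnion_empty]
        refine Set.union_subset idxZero_subset_SB (Set.union_subset ?_ (hP.trans (Set.subset_insert _ _)))
        exact ((idxSum_mono ihB ihP).trans idxSum_SB_SA).trans (Set.subset_insert _ _)
      · refine Set.union_subset ?_ ?_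
        · rw [extUnion_empty]
          refine (?_ : extUnion idxZero _ ⊆ SC)
          have hX : idxSum (scriRec ∅ n).2.2 (scriRec ∅ n).1 ∪ idxSMul 2 (scriRec ∅ n).2.1 ⊆ SD :=
            Set.union_subset ((idxSum_mono ihC ihP).trans idxSum_SC_SA)
              ((idxSMul_mono ihB 2).trans two_SB)
          intro p hp
          apply extUnion_idxZero_SD
          rcases hp with (h | h) | ⟨j₁, j₂, h₁, h₂, hle⟩
          · exact Or.inl (Or.inl h)
          · exact Or.inl (Or.inr (hX h))
          · exact Or.inr ⟨j₁, j₂, h₁, hX h₂, hle⟩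
        · simp only [Set.iUnion_subset_iff]
          intro j hj
          exact (idxPlusI_mono ((idxSMul_mono ((idxMinusI_mono ihC).trans minusI_SC) j).trans
            (smul_SG' hj))).trans plusI_SG

lemma mem_minusI_two {C : Set (ℂ × ℕ)} {m₁ m₂ m a b j : ℕ}
    (h₁ : (-(m₁ : ℂ) * Complex.I, a) ∈ C) (h₂ : (-(m₂ : ℂ) * Complex.I, b) ∈ C)
    (hm : m₁ + m₂ + 1 = m) (hab : a + b = j) :
    (-(m : ℂ) * Complex.I, j) ∈ idxMinusI (idxSMul 2 C) := by
  rw [idxSMul_two, idxSum_singleton]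
  refine ⟨(-(m₁ : ℂ) * Complex.I + -(m₂ : ℂ) * Complex.I, a + b),
    ⟨_, _, _, _, h₁, h₂, rfl⟩, ?_⟩
  subst hm hab
  simp only [Prod.mk.injEq]
  exact ⟨by push_cast; ring, trivial⟩

lemma lower : ∀ k : ℕ,
    (∀ b : ℕ, b ≤ 2 → b + 2 ≤ k → (-(1 : ℂ) * Complex.I, b) ∈ (scriRec ∅ k).1) ∧
    (1 ≤ k → idxZero ⊆ (scriRec ∅ k).2.1) ∧
    (∀ m j : ℕ, j ≤ 3 * m + 1 → j < k → (-(m : ℂ) * Complex.I, j) ∈ (scriRec ∅ k).2.2) := by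
  intro k
  induction k with
  | zero => exact ⟨fun b _ h => by omega, fun h => by omega, fun m j _ h => by omega⟩
  | succ n ih =>
      obtain ⟨ihP, ihB, ihC⟩ := ih
      have hc0 : ∀ b' : ℕ, b' ≤ 1 → b' < n → ((0 : ℂ), b') ∈ (scriRec ∅ n).2.2 := by
        intro b' h1 h2
        have := ihC 0 b' (by omega) h2
        simpa using this
      refine ⟨?_, ?_, ?_⟩
      · -- E'_{I,n+1}
        intro b hb2 hbn
        show _ ∈ extUnion ∅ (idxMinusI (idxSMul 2 (scriRec ∅ n).2.2))
        rw [extUnion_empty]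
        have h₁ : (-((0:ℕ) : ℂ) * Complex.I, min b 1) ∈ (scriRec ∅ n).2.2 := by
          simpa using hc0 (min b 1) (by omega) (by omega)
        have h₂ : (-((0:ℕ) : ℂ) * Complex.I, b - min b 1) ∈ (scriRec ∅ n).2.2 := by
          simpa using hc0 (b - min b 1) (by omega) (by omega)
        have := mem_minusI_two h₁ h₂ (by omega : 0 + 0 + 1 = 1) (by omega : min b 1 + (b - min b 1) = b)
        simpa using this
      · -- Ē_{I,n+1} ⊇ idxZero
        intro _
        exact fun p hp => Or.inl hp
      · -- E_{I,n+1}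
        intro m j hj hjn
        refine Set.mem_union_left _ ?_
        rw [extUnion_empty]
        rcases Nat.eq_zero_or_pos j with rfl | hj1
        · exact Or.inl (Or.inl ⟨m, rfl⟩)
        rcases Nat.lt_or_ge j 2 with hj2 | hj2
        · -- j = 1 : use 2 B_n
          have hm0 : (-(m : ℂ) * Complex.I, 0) ∈ (scriRec ∅ n).2.1 := ihB (by omega) ⟨m, rfl⟩
          have h00 : ((0 : ℂ), 0) ∈ (scriRec ∅ n).2.1 := by
            have := ihB (by omega) (⟨0, by simp⟩ : ((0:ℂ), (0:ℕ)) ∈ idxZero)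
            exact this
          have hmem : (-(m : ℂ) * Complex.I, 0) ∈ idxSMul 2 (scriRec ∅ n).2.1 := by
            rw [idxSMul_two, idxSum_singleton]
            exact ⟨-(m : ℂ) * Complex.I, 0, 0, 0, hm0, h00, by simp⟩
          exact Or.inr ⟨0, 0, ⟨m, rfl⟩, Or.inr hmem, by omega⟩
        · -- 2 ≤ j : use C_n + P_n
          have hm1 : 1 ≤ m := by omega
          have hn2 : 2 ≤ n := by omega
          set b := min (j - 1) (min 2 (n - 2)) with hb
          set a := j - 1 - b with ha
          have hP : (-(1 : ℂ) * Complex.I, b) ∈ (scriRec ∅ n).1 := ihP b (by omega) (by omega)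
          have hC : (-((m - 1 : ℕ) : ℂ) * Complex.I, a) ∈ (scriRec ∅ n).2.2 :=
            ihC (m - 1) a (by omega) (by omega)
          have hsum : (-(m : ℂ) * Complex.I, j - 1) ∈
              idxSum (scriRec ∅ n).2.2 (scriRec ∅ n).1 := by
            refine ⟨_, _, _, _, hC, hP, ?_⟩
            simp only [Prod.mk.injEq]
            constructor
            · rw [Nat.cast_sub hm1]; push_cast; ring
            · omega
          exact Or.inr ⟨0, j - 1, ⟨m, rfl⟩, Or.inl hsum, by omega⟩

lemma mem_P_exists {m j : ℕ} (hm : 1 ≤ m) (hj : j ≤ 3 * m - 1) :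
    (-(m : ℂ) * Complex.I, j) ∈ idxMinusI (idxSMul 2 (scriRec ∅ (j + 1)).2.2) := by
  set a := min j (3 * (m - 1) + 1) with ha
  have h₁ : (-((m - 1 : ℕ) : ℂ) * Complex.I, a) ∈ (scriRec ∅ (j + 1)).2.2 :=
    (lower (j + 1)).2.2 (m - 1) a (by omega) (by omega)
  have h₂ : (-((0 : ℕ) : ℂ) * Complex.I, j - a) ∈ (scriRec ∅ (j + 1)).2.2 :=
    (lower (j + 1)).2.2 0 (j - a) (by omega) (by omega)
  exact mem_minusI_two h₁ h₂ (by omega) (by omega)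


/-- For `E₀ = ∅` (Schwartz perturbations of Schwarzschild data), the index sets at null
infinity are explicitly: `E'_I = {(-i m, j) : m ≥ 1, j ≤ 3m-1}`, `Ē_I = {(0,0)} ∪ E'_I`, and
`E_I = {(-i m, j) : m ≥ 0, j ≤ 3m+1}`. -/
theorem scri_index_sets_schwartz_data :
    (⋃ k, (scriRec ∅ k).1) =
      {p : ℂ × ℕ | ∃ m : ℕ, 1 ≤ m ∧ p.2 ≤ 3 * m - 1 ∧ p.1 = -(m : ℂ) * Complex.I} ∧
    (⋃ k, (scriRec ∅ k).2.1) =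
      insert ((0 : ℂ), (0 : ℕ))
        {p : ℂ × ℕ | ∃ m : ℕ, 1 ≤ m ∧ p.2 ≤ 3 * m - 1 ∧ p.1 = -(m : ℂ) * Complex.I} ∧
    (⋃ k, (scriRec ∅ k).2.2) =
      {p : ℂ × ℕ | ∃ m : ℕ, p.2 ≤ 3 * m + 1 ∧ p.1 = -(m : ℂ) * Complex.I} := by
  refine ⟨?_, ?_, ?_⟩
  · apply Set.Subset.antisymm
    · exact Set.iUnion_subset fun k => (upper k).1
    · rintro ⟨z, j⟩ ⟨m, hm, hj, hz⟩
      dsimp only at hj hz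
      subst hz
      refine Set.mem_iUnion.2 ⟨j + 2, ?_⟩
      show _ ∈ extUnion ∅ (idxMinusI (idxSMul 2 (scriRec ∅ (j + 1)).2.2))
      rw [extUnion_empty]
      exact mem_P_exists hm hj
  · apply Set.Subset.antisymm
    · exact Set.iUnion_subset fun k => (upper k).2.1
    · rintro ⟨z, j⟩ (h | ⟨m, hm, hj, hz⟩)
      · simp only [Prod.mk.injEq] at h
        obtain ⟨rfl, rfl⟩ := h
        refine Set.mem_iUnion.2 ⟨1, ?_⟩
        show _ ∈ idxZero ∪ _
        exact Or.inl ⟨0, by simp⟩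
      · dsimp only at hj hz
        subst hz
        refine Set.mem_iUnion.2 ⟨j + 2, ?_⟩
        show _ ∈ idxZero ∪ extUnion ∅ (idxSum (scriRec ∅ (j + 1)).2.1 (scriRec ∅ (j + 1)).1 ∪
          idxMinusI (idxSMul 2 (scriRec ∅ (j + 1)).2.2))
        rw [extUnion_empty]
        exact Or.inr (Or.inr (mem_P_exists hm hj))
  · apply Set.Subset.antisymm
    · exact Set.iUnion_subset fun k => (upper k).2.2
    · rintro ⟨z, j⟩ ⟨m, hj, hz⟩
      dsimp only at hj hz
      subst hz
      exact Set.mem_iUnion.2 ⟨j + 1, (lower (j + 1)).2.2 m j hj (by omega)⟩
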